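/- Let (u(x))_{x≥1} be i.i.d. ℕ-valued random variables with P(u(1) = 0) < 1, and let v(x) be the dual offspring numbers. Suppose v(1), v(2), v(3), … are mutually independent and v(2), v(3), … all have the same distribution. Then there exist p, q ∈ (0,1] such that P(u(1) = 0) = 1 − q and P(u(1) = k) = q (1 − p)^{k−1} p for all k ≥ 1; that is, the primary reproduction law is linear-fractional. -/

import Mathlib

open MeasureTheory ProbabilityTheory Filter
open scoped ENNReal

/-- If the dual offspring numbers `v(1), v(2), …` of an i.i.d. reproduction law
(with `P(u(1)=0) < 1`) are mutually independent and `v(2), v(3), …` are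
identically distributed, then the primary reproduction law is linear-fractional:
there are `p, q ∈ (0,1]` with `P(u(1)=0) = 1 - q` and
`P(u(1)=k) = q(1-p)^{k-1}p` for `k ≥ 1`. -/
theorem stmt_15 {Ω : Type*} [MeasurableSpace Ω] (μ : Measure Ω) [IsProbabilityMeasure μ]
    (u : ℕ → Ω → ℕ) (hmeas : ∀ x : ℕ, Measurable (u x))
    (hindep : iIndepFun (fun n : ℕ => u (n + 1)) μ)
    (hident : ∀ x : ℕ, 1 ≤ x → ∀ k : ℕ, μ {ω | u x ω = k} = μ {ω | u 1 ω = k})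
    (hP0lt : μ {ω | u 1 ω = 0} < 1)
    (U : Ω → ℕ → ℕ) (hU : ∀ ω : Ω, ∀ x : ℕ, U ω x = ∑ i ∈ Finset.Icc 1 x, u i ω)
    (V : Ω → ℕ → ℕ) (hV : ∀ ω : Ω, ∀ x : ℕ, V ω x = sInf {y : ℕ | x ≤ U ω y})
    (v : ℕ → Ω → ℕ) (hv : ∀ x : ℕ, 1 ≤ x → ∀ ω : Ω, v x ω = V ω x - V ω (x - 1))
    (hvindep : iIndepFun (fun n : ℕ => v (n + 1)) μ)
    (hvident : ∀ x : ℕ, 2 ≤ x → ∀ k : ℕ, μ {ω | v x ω = k} = μ {ω | v 2 ω = k}) :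
    ∃ p q : ℝ≥0∞, 0 < p ∧ p ≤ 1 ∧ 0 < q ∧ q ≤ 1 ∧
      μ {ω | u 1 ω = 0} = 1 - q ∧
      ∀ k : ℕ, 1 ≤ k → μ {ω | u 1 ω = k} = q * (1 - p) ^ (k - 1) * p := by
  classical
  -- identical distribution, upgraded to all sets
  have hmap : ∀ x : ℕ, 1 ≤ x → ∀ S : Set ℕ, μ (u x ⁻¹' S) = μ (u 1 ⁻¹' S) := by
    intro x hx S
    have h1 : Measure.map (u x) μ = Measure.map (u 1) μ := by
      refine Measure.ext_of_singleton fun k => ?_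
      rw [Measure.map_apply (hmeas x) (measurableSet_singleton k),
          Measure.map_apply (hmeas 1) (measurableSet_singleton k)]
      exact hident x hx k
    rw [← Measure.map_apply (hmeas x) .of_discrete,
        ← Measure.map_apply (hmeas 1) .of_discrete, h1]
  set a : ℝ≥0∞ := μ {ω | u 1 ω = 0} with ha
  set t : ℕ → ℝ≥0∞ := fun m => μ {ω | m ≤ u 1 ω} with htdef
  set q : ℝ≥0∞ := t 1 with hqdef
  have ha1 : a ≤ 1 := prob_le_one
  have hcompl : {ω | 1 ≤ u 1 ω} = {ω | u 1 ω = 0}ᶜ := by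
    ext ω; simp [Nat.one_le_iff_ne_zero]
  have hq1a : q = 1 - a := by
    rw [hqdef, htdef]; simp only []
    rw [hcompl]
    exact prob_compl_eq_one_sub ((hmeas 1) (measurableSet_singleton 0))
  have hq0 : q ≠ 0 := by
    rw [hq1a]
    intro h
    exact absurd (tsub_eq_zero_iff_le.mp h) (not_le.mpr hP0lt)
  have hqtop : q ≠ ⊤ := by
    rw [hq1a]; exact (tsub_le_self.trans_lt ENNReal.one_lt_top).ne
  have haq : a = 1 - q := by
    rw [hq1a, ENNReal.sub_sub_cancel ENNReal.one_ne_top ha1]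
  -- independence products for u
  have hprod : ∀ (S : Finset ℕ) (A : ℕ → Set ℕ),
      μ (⋂ n ∈ S, u (n + 1) ⁻¹' A n) = ∏ n ∈ S, μ (u (n + 1) ⁻¹' A n) :=
    fun S A => hindep.measure_inter_preimage_eq_mul S (fun i _ => .of_discrete)
  -- value of singleton events for u x
  have hu0 : ∀ x : ℕ, 1 ≤ x → μ (u x ⁻¹' {0}) = a := by
    intro x hx
    rw [hmap x hx]; rfl
  have huIci : ∀ x m : ℕ, 1 ≤ x → μ (u x ⁻¹' Set.Ici m) = t m := by
    intro x m hx
    rw [hmap x hx]; rfl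
  -- the almost sure event: infinitely many positive u's
  set G : Set Ω := {ω | ∀ N : ℕ, ∃ y : ℕ, N ≤ y ∧ 1 ≤ u y ω} with hG
  have hGnull : μ Gᶜ = 0 := by
    have hsub : Gᶜ ⊆ ⋃ N : ℕ, {ω | ∀ y, N ≤ y → u y ω = 0} := by
      intro ω hω
      simp only [hG, Set.mem_compl_iff, Set.mem_setOf_eq, not_forall] at hω
      obtain ⟨N, hN⟩ := hω
      refine Set.mem_iUnion.mpr ⟨N, fun y hy => ?_⟩
      by_contra hne
      exact hN ⟨y, hy, by omega⟩
    refine measure_mono_null hsub (measure_iUnion_null fun N => ?_)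
    have hleq : ∀ m : ℕ, μ {ω | ∀ y, N ≤ y → u y ω = 0} ≤ a ^ m := by
      intro m
      have hsub2 : {ω | ∀ y, N ≤ y → u y ω = 0} ⊆
          ⋂ j ∈ Finset.Ico N (N + m), u (j + 1) ⁻¹' {0} := by
        intro ω hω
        simp only [Set.mem_iInter, Finset.mem_Ico]
        intro j hj
        exact hω (j + 1) (by omega)
      refine le_trans (measure_mono hsub2) ?_
      rw [hprod]
      have heach : ∀ j ∈ Finset.Ico N (N + m), μ (u (j + 1) ⁻¹' ({0} : Set ℕ)) = a :=
        fun j _ => hu0 (j + 1) (Nat.le_add_left 1 j)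
      rw [Finset.prod_congr rfl heach, Finset.prod_const, Nat.card_Ico]
      simp
    have h0 : Tendsto (fun m : ℕ => a ^ m) atTop (nhds 0) :=
      ENNReal.tendsto_pow_atTop_nhds_zero_of_lt_one hP0lt
    exact le_antisymm (ge_of_tendsto' h0 hleq) (zero_le)
  -- the key events
  set E : ℕ → ℕ → Set Ω := fun k n =>
    (⋂ i ∈ Finset.range n, u (i + 1) ⁻¹' {0}) ∩ u (n + 1) ⁻¹' Set.Ici (k + 1) with hE
  set B : ℕ → Set Ω := fun k => ⋂ n ∈ Finset.Icc 1 k, v (n + 1) ⁻¹' {0} with hB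
  -- pathwise identification on G
  have hpath : ∀ k : ℕ, 1 ≤ k → ∀ ω ∈ G, (ω ∈ B k ↔ ω ∈ ⋃ n, E k n) := by
    intro k hk ω hωG
    have hU0 : U ω 0 = 0 := by rw [hU]; simp
    have hUnb : ∀ x : ℕ, ∃ z, x ≤ U ω z := by
      intro x
      induction x with
      | zero => exact ⟨0, zero_le⟩
      | succ x ih =>
        obtain ⟨z, hz⟩ := ih
        obtain ⟨y, hy1, hy2⟩ := hωG (z + 1)
        refine ⟨y, ?_⟩
        have h1 : U ω z + u y ω ≤ U ω y := by
          rw [hU, hU]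
          have hins : insert y (Finset.Icc 1 z) ⊆ Finset.Icc 1 y := by
            intro i hi
            simp only [Finset.mem_insert, Finset.mem_Icc] at hi ⊢
            omega
          calc ∑ i ∈ Finset.Icc 1 z, u i ω + u y ω
              = ∑ i ∈ insert y (Finset.Icc 1 z), u i ω := by
                rw [Finset.sum_insert (by simp only [Finset.mem_Icc]; omega), add_comm]
            _ ≤ ∑ i ∈ Finset.Icc 1 y, u i ω :=
                Finset.sum_le_sum_of_subset hins
        omega
    have hVspec : ∀ x : ℕ, x ≤ U ω (V ω x) := by
      intro x
      have hh := Nat.sInf_mem (hUnb x)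
      rw [hV]
      exact hh
    have hVle : ∀ x y : ℕ, x ≤ U ω y → V ω x ≤ y := by
      intro x y h
      rw [hV]
      exact Nat.sInf_le h
    constructor
    · intro hωB
      simp only [hB, Set.mem_iInter, Finset.mem_Icc, Set.mem_preimage,
        Set.mem_singleton_iff] at hωB
      set y := V ω 1 with hy
      have hy1 : 1 ≤ y := by
        by_contra h
        have hy0 : y = 0 := by omega
        have h1 := hVspec 1
        rw [← hy, hy0, hU0] at h1
        omega
      have hVmono : ∀ x x' : ℕ, x ≤ x' → V ω x ≤ V ω x' := by
        intro x x' h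
        exact hVle x (V ω x') (le_trans h (hVspec x'))
      have hVconst : ∀ j : ℕ, 1 ≤ j → j ≤ k + 1 → V ω j = y := by
        intro j
        induction j with
        | zero => intro h; omega
        | succ j ih =>
          intro _ hj2
          rcases Nat.eq_zero_or_pos j with rfl | hj
          · exact hy.symm
          · have hvj := hωB j ⟨hj, by omega⟩
            rw [hv (j + 1) (by omega)] at hvj
            simp only [Nat.add_sub_cancel] at hvj
            have h2 : V ω j ≤ V ω (j + 1) := hVmono j (j + 1) (by omega)
            have h3 := ih hj (by omega)
            omega
      have hzero : ∀ i, 1 ≤ i → i < y → u i ω = 0 := by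
        intro i hi1 hi2
        by_contra hne
        have h1 : 1 ≤ U ω i := by
          rw [hU]
          calc 1 ≤ u i ω := by omega
            _ ≤ ∑ j ∈ Finset.Icc 1 i, u j ω :=
              Finset.single_le_sum (f := fun j => u j ω) (fun _ _ => zero_le)
                (Finset.mem_Icc.mpr (by omega))
        have h3 := hVle 1 i h1
        rw [← hy] at h3
        omega
      have hUy : U ω y = u y ω := by
        rw [hU]
        rw [Finset.sum_eq_single_of_mem y (by simp only [Finset.mem_Icc]; omega)]
        intro i hi hne
        simp only [Finset.mem_Icc] at hi
        exact hzero i hi.1 (by omega)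
      have hky : k + 1 ≤ u y ω := by
        have h1 := hVspec (k + 1)
        rw [hVconst (k + 1) (by omega) le_rfl, hUy] at h1
        exact h1
      refine Set.mem_iUnion.mpr ⟨y - 1, ?_⟩
      rw [hE]
      refine ⟨?_, ?_⟩
      · simp only [Set.mem_iInter, Finset.mem_range, Set.mem_preimage, Set.mem_singleton_iff]
        intro i hi
        exact hzero (i + 1) (by omega) (by omega)
      · show k + 1 ≤ u (y - 1 + 1) ω
        rw [Nat.sub_add_cancel hy1]
        exact hky
    · intro hωE
      obtain ⟨n, hωn⟩ := Set.mem_iUnion.mp hωE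
      rw [hE] at hωn
      obtain ⟨h1, h2⟩ := hωn
      simp only [Set.mem_iInter, Finset.mem_range, Set.mem_preimage, Set.mem_singleton_iff] at h1
      have h2' : k + 1 ≤ u (n + 1) ω := h2
      have hUz : ∀ z, z ≤ n → U ω z = 0 := by
        intro z hz
        rw [hU]
        refine Finset.sum_eq_zero fun i hi => ?_
        simp only [Finset.mem_Icc] at hi
        have hi' : i - 1 < n := by omega
        have hh := h1 (i - 1) hi'
        rwa [Nat.sub_add_cancel hi.1] at hh
      have hUn1 : k + 1 ≤ U ω (n + 1) := by
        rw [hU]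
        calc k + 1 ≤ u (n + 1) ω := h2'
          _ ≤ ∑ i ∈ Finset.Icc 1 (n + 1), u i ω :=
            Finset.single_le_sum (f := fun i => u i ω) (fun _ _ => zero_le)
              (Finset.mem_Icc.mpr (by omega))
      have hVx : ∀ x, 1 ≤ x → x ≤ k + 1 → V ω x = n + 1 := by
        intro x hx1 hx2
        have hle : V ω x ≤ n + 1 := hVle x (n + 1) (le_trans (by omega) hUn1)
        have hge : n + 1 ≤ V ω x := by
          by_contra h
          have hz : V ω x ≤ n := by omega
          have hs := hVspec x
          rw [hUz (V ω x) hz] at hs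
          omega
        omega
      simp only [hB, Set.mem_iInter, Finset.mem_Icc, Set.mem_preimage, Set.mem_singleton_iff]
      intro j hj
      rw [hv (j + 1) (by omega)]
      simp only [Nat.add_sub_cancel]
      have e1 : V ω (j + 1) = n + 1 := hVx (j + 1) (by omega) (by omega)
      have e2 : V ω j = n + 1 := hVx j (by omega) (by omega)
      omega
  -- measure of E k n
  have hEmeas : ∀ k n, μ (E k n) = a ^ n * t (k + 1) := by
    intro k n
    set A : ℕ → Set ℕ := fun m => if m = n then Set.Ici (k + 1) else {0} with hA
    have hset : E k n = ⋂ m ∈ Finset.range (n + 1), u (m + 1) ⁻¹' A m := by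
      rw [hE]
      ext ω
      simp only [Set.mem_inter_iff, Set.mem_iInter, Finset.mem_range, Set.mem_preimage,
        Set.mem_singleton_iff, hA]
      constructor
      · rintro ⟨h1, h2⟩ m hm
        rcases eq_or_ne m n with rfl | hne
        · simpa using h2
        · simp only [if_neg hne, Set.mem_singleton_iff]
          exact h1 m (by omega)
      · intro h
        refine ⟨fun m hm => ?_, ?_⟩
        · have hh := h m (by omega)
          simpa [if_neg (by omega : m ≠ n)] using hh
        · have hh := h n (by omega)
          simpa using hh
    rw [hset, hprod, Finset.prod_range_succ]
    have h1 : ∀ m ∈ Finset.range n, μ (u (m + 1) ⁻¹' A m) = a := by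
      intro m hm
      rw [hA]; simp only [if_neg (Finset.mem_range.mp hm).ne]
      exact hu0 (m + 1) (Nat.le_add_left 1 m)
    rw [Finset.prod_congr rfl h1, Finset.prod_const, Finset.card_range]
    congr 1
    rw [hA]; simp only [if_pos rfl]
    exact huIci (n + 1) (k + 1) (Nat.le_add_left 1 n)
  have hEdisj : ∀ k, 1 ≤ k → Pairwise (Function.onFun Disjoint (E k)) := by
    intro k hk
    have key : ∀ n m, n < m → Disjoint (E k n) (E k m) := by
      intro n m h
      refine Set.disjoint_left.mpr fun ω hω1 hω2 => ?_
      rw [hE] at hω1 hω2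
      have h1 : k + 1 ≤ u (n + 1) ω := hω1.2
      have h2 : u (n + 1) ω = 0 := by
        have hh := hω2.1
        simp only [Set.mem_iInter, Finset.mem_range, Set.mem_preimage,
          Set.mem_singleton_iff] at hh
        exact hh n h
      omega
    intro n m hnm
    rcases lt_or_gt_of_ne hnm with h | h
    · exact key n m h
    · exact (key m n h).symm
  have hEms : ∀ k n, MeasurableSet (E k n) := by
    intro k n
    exact ((Finset.measurableSet_biInter _ (fun i _ => (hmeas (i+1)) .of_discrete)).inter
      ((hmeas (n+1)) .of_discrete))
  have hUnion : ∀ k, 1 ≤ k → μ (⋃ n, E k n) = t (k + 1) * q⁻¹ := by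
    intro k hk
    rw [measure_iUnion (hEdisj k hk) (hEms k)]
    simp only [hEmeas]
    rw [ENNReal.tsum_mul_right, ENNReal.tsum_geometric, ← hq1a, mul_comm]
  -- measure of B k via independence of v's
  set b : ℝ≥0∞ := μ (v 2 ⁻¹' {0}) with hb
  have hBmeas : ∀ k, 1 ≤ k → μ (B k) = b ^ k := by
    intro k hk
    rw [hB]
    rw [hvindep.meas_biInter (fun i _ => ⟨{0}, .of_discrete, rfl⟩)]
    have heach : ∀ n ∈ Finset.Icc 1 k, μ (v (n + 1) ⁻¹' {0}) = b := by
      intro n hn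
      have hn2 : 2 ≤ n + 1 := by
        have := (Finset.mem_Icc.mp hn).1; omega
      exact hvident (n + 1) hn2 0
    rw [Finset.prod_congr rfl heach, Finset.prod_const, Nat.card_Icc]
    simp
  -- key equation
  have hkey : ∀ k : ℕ, 1 ≤ k → t (k + 1) = q * b ^ k := by
    intro k hk
    have h1 : μ (B k) = μ (⋃ n, E k n) := by
      apply le_antisymm
      · calc μ (B k) ≤ μ ((⋃ n, E k n) ∪ Gᶜ) := by
              apply measure_mono
              intro ω hω
              by_cases hωG : ω ∈ G
              · exact Or.inl ((hpath k hk ω hωG).mp hω)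
              · exact Or.inr hωG
          _ ≤ μ (⋃ n, E k n) + μ Gᶜ := measure_union_le _ _
          _ = μ (⋃ n, E k n) := by rw [hGnull, add_zero]
      · calc μ (⋃ n, E k n) ≤ μ (B k ∪ Gᶜ) := by
              apply measure_mono
              intro ω hω
              by_cases hωG : ω ∈ G
              · exact Or.inl ((hpath k hk ω hωG).mpr hω)
              · exact Or.inr hωG
          _ ≤ μ (B k) + μ Gᶜ := measure_union_le _ _
          _ = μ (B k) := by rw [hGnull, add_zero]
    have h2 : t (k + 1) * q⁻¹ = b ^ k := by
      rw [← hUnion k hk, ← h1, hBmeas k hk]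
    calc t (k + 1) = t (k + 1) * q⁻¹ * q := by
          rw [mul_assoc, ENNReal.inv_mul_cancel hq0 hqtop, mul_one]
      _ = b ^ k * q := by rw [h2]
      _ = q * b ^ k := mul_comm _ _
  -- b < 1
  have hb1 : b ≤ 1 := prob_le_one
  have htlim : Tendsto t atTop (nhds 0) := by
    have hi : ⋂ m : ℕ, {ω | m ≤ u 1 ω} = ∅ := by
      ext ω
      simp only [Set.mem_iInter, Set.mem_setOf_eq, Set.mem_empty_iff_false, iff_false, not_forall]
      exact ⟨u 1 ω + 1, by omega⟩
    have hh := tendsto_measure_iInter_atTop (μ := μ) (s := fun m => {ω | m ≤ u 1 ω})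
      (fun m => ((hmeas 1) (.of_discrete : MeasurableSet (Set.Ici m))).nullMeasurableSet)
      (fun m m' h => Set.setOf_subset_setOf.mpr fun ω hω => le_trans h hω)
      ⟨0, measure_ne_top μ _⟩
    rw [hi] at hh
    rw [measure_empty] at hh; exact hh
  have hblt : b < 1 := by
    rcases lt_or_eq_of_le hb1 with h | h
    · exact h
    · exfalso
      have : ∀ k : ℕ, 1 ≤ k → t (k + 1) = q := by
        intro k hk; rw [hkey k hk, h, one_pow, mul_one]
      have hle : q ≤ 0 := by
        refine ge_of_tendsto' (htlim.comp (tendsto_add_atTop_nat 2)) fun k => ?_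
        show q ≤ t (k + 2)
        exact (this (k + 1) (le_add_self)).symm.le
      exact hq0 (le_antisymm hle (zero_le))
  -- conclude
  refine ⟨1 - b, q, ?_, ?_, ?_, ?_, haq, ?_⟩
  · exact tsub_pos_iff_lt.mpr hblt
  · exact tsub_le_self
  · exact pos_iff_ne_zero.mpr hq0
  · rw [hq1a]; exact tsub_le_self
  · intro k hk
    have h1b : 1 - (1 - b) = b := ENNReal.sub_sub_cancel ENNReal.one_ne_top hb1
    rw [h1b]
    have ht' : ∀ m : ℕ, 1 ≤ m → t m = q * b ^ (m - 1) := by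
      intro m hm
      rcases Nat.exists_eq_add_of_le hm with ⟨j, rfl⟩
      rcases Nat.eq_zero_or_pos j with rfl | hj
      · simp [hqdef]
      · have h := hkey j hj
        have h2 : 1 + j = j + 1 := Nat.add_comm 1 j
        rw [h2, Nat.add_sub_cancel, h]
    have hsplit : μ {ω | u 1 ω = k} + t (k + 1) = t k := by
      rw [htdef]
      have hdis : Disjoint {ω | u 1 ω = k} {ω | k + 1 ≤ u 1 ω} := by
        rw [Set.disjoint_left]
        intro ω h1 h2
        simp only [Set.mem_setOf_eq] at h1 h2
        omega
      rw [← measure_union hdis ((hmeas 1) (.of_discrete : MeasurableSet (Set.Ici (k + 1))))]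
      congr 1
      ext ω
      simp only [Set.mem_union, Set.mem_setOf_eq]
      omega
    have hfin : t (k + 1) ≠ ⊤ := measure_ne_top μ _
    have := ENNReal.eq_sub_of_add_eq hfin hsplit
    rw [this, ht' k hk, ht' (k + 1) le_add_self, Nat.add_sub_cancel]
    have hpow : b ^ k = b ^ (k - 1) * b := by
      conv_lhs => rw [← Nat.succ_pred_eq_of_pos hk]
      rw [pow_succ, Nat.pred_eq_sub_one]
    rw [hpow, ← mul_assoc]
    calc q * b ^ (k - 1) - q * b ^ (k - 1) * b
        = q * b ^ (k - 1) * 1 - q * b ^ (k - 1) * b := by rw [mul_one]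
      _ = q * b ^ (k - 1) * (1 - b) := by
          rw [← ENNReal.mul_sub fun _ _ =>
            ENNReal.mul_ne_top hqtop (ENNReal.pow_ne_top (measure_ne_top μ _))]
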